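/- arXiv:2211.04659 — 2 statements merged into one kernel-verified Lean document; each statement's English description precedes it below -/
import Mathlib

section
/- Define the sequence of polynomials P̃_0(λ) = 1, P̃_1(λ) = 1 − hλ(1 − γλ)/(1+m), and P̃_{t+1}(λ) = (1 + m − hλ(1 − γλ)) P̃_t(λ) − m P̃_{t−1}(λ). Then for every t, P̃_t(λ) = m^{t/2} ( (2m/(1+m)) T_t(σ(λ)) + ((1−m)/(1+m)) U_t(σ(λ)) ), where σ(λ) = (1 + m − hλ(1 − γλ)) / (2√m). -/
open Polynomial

theorem egm_residual_polynomial_chebyshev (h γ m : ℝ) (hm : 0 < m)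
    (P : ℕ → ℝ → ℝ)
    (hP0 : ∀ lam, P 0 lam = 1)
    (hP1 : ∀ lam, P 1 lam = 1 - h * lam * (1 - γ * lam) / (1 + m))
    (hPrec : ∀ t lam, P (t + 2) lam =
      (1 + m - h * lam * (1 - γ * lam)) * P (t + 1) lam - m * P t lam) :
    ∀ t lam, P t lam =
      m ^ ((t : ℝ) / 2) *
        ((2 * m / (1 + m)) *
            (Polynomial.Chebyshev.T ℝ t).eval ((1 + m - h * lam * (1 - γ * lam)) / (2 * Real.sqrt m)) +
          ((1 - m) / (1 + m)) *
            (Polynomial.Chebyshev.U ℝ t).eval ((1 + m - h * lam * (1 - γ * lam)) / (2 * Real.sqrt m))) := by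
  have hs : Real.sqrt m ^ 2 = m := Real.sq_sqrt hm.le
  have hs0 : Real.sqrt m ≠ 0 := by positivity
  have h1m : (1 : ℝ) + m ≠ 0 := by positivity
  have hpow : ∀ t : ℕ, m ^ ((t : ℝ) / 2) = Real.sqrt m ^ t := by
    intro t
    rw [Real.sqrt_eq_rpow, ← Real.rpow_natCast (m ^ ((1:ℝ)/2)) t,
      ← Real.rpow_mul hm.le]
    congr 1
    ring
  set s := Real.sqrt m with hsdef
  suffices H : ∀ t : ℕ, (∀ lam, P t lam =
      s ^ t *
        ((2 * m / (1 + m)) *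
            (Polynomial.Chebyshev.T ℝ t).eval ((1 + m - h * lam * (1 - γ * lam)) / (2 * s)) +
          ((1 - m) / (1 + m)) *
            (Polynomial.Chebyshev.U ℝ t).eval ((1 + m - h * lam * (1 - γ * lam)) / (2 * s)))) ∧
      (∀ lam, P (t+1) lam =
      s ^ (t+1) *
        ((2 * m / (1 + m)) *
            (Polynomial.Chebyshev.T ℝ (t+1)).eval ((1 + m - h * lam * (1 - γ * lam)) / (2 * s)) +
          ((1 - m) / (1 + m)) *
            (Polynomial.Chebyshev.U ℝ (t+1)).eval ((1 + m - h * lam * (1 - γ * lam)) / (2 * s)))) by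
    intro t lam
    rw [hpow t]
    exact (H t).1 lam
  intro t
  induction t with
  | zero =>
      constructor
      · intro lam
        simp only [Nat.cast_zero, pow_zero, Polynomial.Chebyshev.T_zero,
          Polynomial.Chebyshev.U_zero, Polynomial.eval_one, hP0]
        field_simp
        ring
      · intro lam
        simp only [Nat.cast_zero, zero_add, Nat.cast_one, pow_one, Polynomial.Chebyshev.T_one,
          Polynomial.Chebyshev.U_one, Polynomial.eval_X, Polynomial.eval_mul,
          Polynomial.eval_ofNat, hP1]
        field_simp
        ring
  | succ n ih =>
      refine ⟨ih.2, fun lam => ?_⟩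
      rw [hPrec n lam, ih.1 lam, ih.2 lam]
      set c := 1 + m - h * lam * (1 - γ * lam) with hc
      set x := c / (2 * s) with hxdef
      have hx : 2 * s * x = c := by
        rw [hxdef]; field_simp
      have hcast : ((n : ℤ) + 1 + 1) = (n : ℤ) + 2 := by ring
      rw [show (((n:ℕ) + 1 : ℕ) : ℤ) + 1 = (n : ℤ) + 2 by push_cast; ring,
        Polynomial.Chebyshev.T_add_two, Polynomial.Chebyshev.U_add_two]
      simp only [Polynomial.eval_sub, Polynomial.eval_mul, Polynomial.eval_X,
        Polynomial.eval_ofNat]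
      set T0 := (Polynomial.Chebyshev.T ℝ (n : ℤ)).eval x
      set T1 := (Polynomial.Chebyshev.T ℝ ((n : ℤ) + 1)).eval x
      set U0 := (Polynomial.Chebyshev.U ℝ (n : ℤ)).eval x
      set U1 := (Polynomial.Chebyshev.U ℝ ((n : ℤ) + 1)).eval x
      rw [← hx, ← hs]
      ring
end

section
/- Let 0 < μ ≤ L, c > 0, and set γ = 1/(μ+L), h = 16(μ+L)/(√(4c² + (μ+L)²) + √(4μL))², and √m = (√(4c² + (μ+L)²) − √(4μL))/(√(4c² + (μ+L)²) + √(4μL)). Then these values satisfy: 1/(2γ) − √(1/(4γ²) − (1−√m)²/(hγ)) = μ, 1/(2γ) + √(1/(4γ²) − (1−√m)²/(hγ)) = L, and √((1+√m)²/(hγ) − 1/(4γ²)) = c. -/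
theorem egm_optimal_hyperparameters (μ L c : ℝ) (hμ : 0 < μ) (hμL : μ ≤ L) (hc : 0 < c)
    (γ h sm : ℝ)
    (hγ : γ = 1 / (μ + L))
    (hh : h = 16 * (μ + L) / (Real.sqrt (4 * c ^ 2 + (μ + L) ^ 2) + Real.sqrt (4 * μ * L)) ^ 2)
    (hsm : sm = (Real.sqrt (4 * c ^ 2 + (μ + L) ^ 2) - Real.sqrt (4 * μ * L)) /
        (Real.sqrt (4 * c ^ 2 + (μ + L) ^ 2) + Real.sqrt (4 * μ * L))) :
    1 / (2 * γ) - Real.sqrt (1 / (4 * γ ^ 2) - (1 - sm) ^ 2 / (h * γ)) = μ ∧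
    1 / (2 * γ) + Real.sqrt (1 / (4 * γ ^ 2) - (1 - sm) ^ 2 / (h * γ)) = L ∧
    Real.sqrt ((1 + sm) ^ 2 / (h * γ) - 1 / (4 * γ ^ 2)) = c ∧
    0 ≤ 1 / (4 * γ ^ 2) - (1 - sm) ^ 2 / (h * γ) ∧
    0 ≤ (1 + sm) ^ 2 / (h * γ) - 1 / (4 * γ ^ 2) := by
  set S := Real.sqrt (4 * c ^ 2 + (μ + L) ^ 2) with hSdef
  set T := Real.sqrt (4 * μ * L) with hTdef
  have hL : 0 < L := lt_of_lt_of_le hμ hμL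
  have hμL0 : 0 < μ + L := by linarith
  have hS2 : S ^ 2 = 4 * c ^ 2 + (μ + L) ^ 2 := by
    rw [hSdef]; exact Real.sq_sqrt (by positivity)
  have hT2 : T ^ 2 = 4 * μ * L := by
    rw [hTdef]; exact Real.sq_sqrt (by positivity)
  have hSpos : 0 < S := by rw [hSdef]; exact Real.sqrt_pos.mpr (by positivity)
  have hTpos : 0 < T := by rw [hTdef]; exact Real.sqrt_pos.mpr (by positivity)
  have hST : 0 < S + T := by linarith
  have hinv : 1 / (2 * γ) = (μ + L) / 2 := by rw [hγ]; field_simp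
  have hhγ : h * γ = 16 / (S + T) ^ 2 := by rw [hh, hγ]; field_simp; try ring
  have hsm1 : 1 - sm = 2 * T / (S + T) := by rw [hsm]; field_simp; try ring
  have hsm2 : 1 + sm = 2 * S / (S + T) := by rw [hsm]; field_simp; try ring
  have e0 : 1 / (4 * γ ^ 2) = (μ + L) ^ 2 / 4 := by rw [hγ]; field_simp; try ring
  have e1 : (1 - sm) ^ 2 / (h * γ) = μ * L := by
    rw [hsm1, hhγ]
    field_simp
    linarith [hT2]
  have e2 : (1 + sm) ^ 2 / (h * γ) = c ^ 2 + (μ + L) ^ 2 / 4 := by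
    rw [hsm2, hhγ]
    field_simp
    linarith [hS2]
  have E1 : 1 / (4 * γ ^ 2) - (1 - sm) ^ 2 / (h * γ) = ((L - μ) / 2) ^ 2 := by
    rw [e0, e1]; ring
  have E2 : (1 + sm) ^ 2 / (h * γ) - 1 / (4 * γ ^ 2) = c ^ 2 := by
    rw [e2, e0]; ring
  have s1 : Real.sqrt (1 / (4 * γ ^ 2) - (1 - sm) ^ 2 / (h * γ)) = (L - μ) / 2 := by
    rw [E1]; exact Real.sqrt_sq (by linarith)
  have s2 : Real.sqrt ((1 + sm) ^ 2 / (h * γ) - 1 / (4 * γ ^ 2)) = c := by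
    rw [E2]; exact Real.sqrt_sq hc.le
  refine ⟨by rw [hinv, s1]; ring, by rw [hinv, s1]; ring, s2, by rw [E1]; positivity,
    by rw [E2]; positivity⟩
end
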